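/- Let c₀ ≠ 0 and suppose f satisfies f''(u) + c₀ f'(u)² - c₀ = 0 on an open interval with |f'| < 1. Then f(u) = (1/c₀) ln |e^{c₀u} - ĉ e^{-c₀u}| + const for some constant ĉ ≠ 0 (on intervals where e^{c₀u} - ĉ e^{-c₀u} ≠ 0). -/

import Mathlib

private lemma const_of_hasDerivAt_zero' {α β : ℝ} {F : ℝ → ℝ}
    (h : ∀ u ∈ Set.Ioo α β, HasDerivAt F 0 u) :
    ∀ u ∈ Set.Ioo α β, ∀ v ∈ Set.Ioo α β, F u = F v := by
  intro u hu v hv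
  apply (convex_Ioo α β).is_const_of_fderivWithin_eq_zero
    (fun x hx => ((h x hx).differentiableAt).differentiableWithinAt) ?_ hu hv
  intro x hx
  rw [fderivWithin_of_isOpen isOpen_Ioo hx, (h x hx).hasFDerivAt.fderiv]
  exact ContinuousLinearMap.ext fun y => by simp

theorem stmt_17 (c₀ α β : ℝ) (hc₀ : c₀ ≠ 0) (f : ℝ → ℝ)
    (hd1 : ∀ u ∈ Set.Ioo α β, DifferentiableAt ℝ f u)
    (hd2 : ∀ u ∈ Set.Ioo α β, DifferentiableAt ℝ (deriv f) u)
    (hsp : ∀ u ∈ Set.Ioo α β, |deriv f u| < 1)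
    (hode : ∀ u ∈ Set.Ioo α β,
      deriv (deriv f) u + c₀ * (deriv f u) ^ 2 - c₀ = 0) :
    ∃ (chat b : ℝ), chat ≠ 0 ∧ ∀ u ∈ Set.Ioo α β,
      Real.exp (c₀ * u) - chat * Real.exp (-(c₀ * u)) ≠ 0 ∧
      f u = (1 / c₀) * Real.log |Real.exp (c₀ * u) - chat * Real.exp (-(c₀ * u))| + b := by
  rcases Set.eq_empty_or_nonempty (Set.Ioo α β) with hS | ⟨u₀, hu₀⟩
  · exact ⟨1, 0, one_ne_zero, fun u hu => by rw [hS] at hu; exact absurd hu (Set.notMem_empty u)⟩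
  set g := deriv f with hgdef
  have hg1 : ∀ u ∈ Set.Ioo α β, (0:ℝ) < 1 - g u := fun u hu => by
    have := abs_lt.1 (hsp u hu); linarith [this.2]
  have hg2 : ∀ u ∈ Set.Ioo α β, (0:ℝ) < 1 + g u := fun u hu => by
    have := abs_lt.1 (hsp u hu); linarith [this.1]
  have hgd : ∀ u ∈ Set.Ioo α β, HasDerivAt g (c₀ * (1 - g u ^ 2)) u := by
    intro u hu
    have h1 := (hd2 u hu).hasDerivAt
    have h2 := hode u hu
    have h3 : deriv g u = c₀ * (1 - g u ^ 2) := by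
      ring_nf at h2 ⊢; linarith [h2]
    rwa [h3] at h1
  set w : ℝ → ℝ := fun u => (1 + g u) / (1 - g u) * Real.exp (-(2*c₀)*u) with hw
  have hwd : ∀ u ∈ Set.Ioo α β, HasDerivAt w 0 u := by
    intro u hu
    have hne : 1 - g u ≠ 0 := (hg1 u hu).ne'
    have hq : HasDerivAt (fun u => (1 + g u) / (1 - g u))
        (((0 + c₀ * (1 - g u ^ 2)) * (1 - g u) - (1 + g u) * (0 - c₀ * (1 - g u ^ 2)))
          / (1 - g u)^2) u :=
      ((hasDerivAt_const u 1).add (hgd u hu)).div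
        ((hasDerivAt_const u 1).sub (hgd u hu)) hne
    have hlin : HasDerivAt (fun u : ℝ => -(2*c₀)*u) (-(2*c₀)) u := by
      simpa using (hasDerivAt_id u).const_mul (-(2*c₀))
    have hexp : HasDerivAt (fun u => Real.exp (-(2*c₀)*u))
        (Real.exp (-(2*c₀)*u) * (-(2*c₀))) u := hlin.exp
    have := hq.mul hexp
    refine this.congr_deriv (Eq.symm ?_)
    field_simp
    ring
  have hwconst : ∀ u ∈ Set.Ioo α β, w u = w u₀ :=
    fun u hu => const_of_hasDerivAt_zero' hwd u hu u₀ hu₀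
  set C := w u₀ with hC
  have hCpos : 0 < C := by
    have := hg1 u₀ hu₀; have := hg2 u₀ hu₀
    exact mul_pos (div_pos (hg2 u₀ hu₀) (hg1 u₀ hu₀)) (Real.exp_pos _)
  -- key algebraic identity
  have hkey : ∀ u ∈ Set.Ioo α β,
      g u * (C * Real.exp (c₀*u)^2 + 1) = C * Real.exp (c₀*u)^2 - 1 := by
    intro u hu
    have h := hwconst u hu
    have hne : 1 - g u ≠ 0 := (hg1 u hu).ne'
    have hE : Real.exp (-(2*c₀)*u) = (Real.exp (c₀*u)^2)⁻¹ := by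
      rw [pow_two, ← Real.exp_add, ← Real.exp_neg]; ring_nf
    have hEne : Real.exp (c₀*u)^2 ≠ 0 := pow_ne_zero _ (Real.exp_ne_zero _)
    rw [hw] at h
    simp only at h
    rw [hE] at h
    field_simp at h
    linear_combination h
  set chat : ℝ := -(1/C) with hchat
  have hchatne : chat ≠ 0 := by
    simp [hchat]; positivity
  set P : ℝ → ℝ := fun u => Real.exp (c₀ * u) - chat * Real.exp (-(c₀ * u)) with hP
  have hPpos : ∀ u, 0 < P u := by
    intro u
    have : P u = Real.exp (c₀*u) + (1/C) * Real.exp (-(c₀*u)) := by simp only [hP, hchat]; ring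
    rw [this]; positivity
  set F : ℝ → ℝ := fun u => f u - (1/c₀) * Real.log (P u) with hF
  have hFd : ∀ u ∈ Set.Ioo α β, HasDerivAt F 0 u := by
    intro u hu
    have hf' : HasDerivAt f (g u) u := (hd1 u hu).hasDerivAt
    have hl1 : HasDerivAt (fun u : ℝ => c₀*u) c₀ u := by
      simpa using (hasDerivAt_id u).const_mul c₀
    have hl2 : HasDerivAt (fun u : ℝ => -(c₀*u)) (-c₀) u := hl1.neg
    have hPd : HasDerivAt P (Real.exp (c₀*u) * c₀ - chat * (Real.exp (-(c₀*u)) * (-c₀))) u :=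
      hl1.exp.sub ((hl2.exp).const_mul chat)
    have hlog : HasDerivAt (fun u => Real.log (P u))
        ((Real.exp (c₀*u) * c₀ - chat * (Real.exp (-(c₀*u)) * (-c₀))) / P u) u :=
      hPd.log (hPpos u).ne'
    have := hf'.sub (hlog.const_mul (1/c₀))
    refine this.congr_deriv (Eq.symm ?_)
    have hkey' := hkey u hu
    have hPu : P u = Real.exp (c₀*u) + (1/C) * Real.exp (-(c₀*u)) := by
      simp only [hP, hchat]; ring
    have hEneg : Real.exp (-(c₀*u)) = (Real.exp (c₀*u))⁻¹ := Real.exp_neg _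
    have hEne : Real.exp (c₀*u) ≠ 0 := Real.exp_ne_zero _
    rw [eq_comm, sub_eq_zero]
    rw [hPu, hchat, hEneg]
    clear_value P chat C
    field_simp
    linear_combination hkey'
  have hFconst : ∀ u ∈ Set.Ioo α β, F u = F u₀ :=
    fun u hu => const_of_hasDerivAt_zero' hFd u hu u₀ hu₀
  refine ⟨chat, F u₀, hchatne, fun u hu => ⟨(hPpos u).ne', ?_⟩⟩
  have := hFconst u hu
  rw [hF] at this
  simp only at this
  have habs : |Real.exp (c₀ * u) - chat * Real.exp (-(c₀ * u))| = P u := abs_of_pos (hPpos u)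
  rw [habs]
  linarith [this]
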